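/- A commutative ring whose every simple module is injective (a commutative V-ring) is von Neumann regular; consequently, a commutative local V-ring is a field. -/

import Mathlib

universe u

lemma key (R : Type u) [CommRing R]
    (hV : ∀ (M : Type u) [AddCommGroup M] [Module R M], IsSimpleModule R M →
      Module.Injective R M) (a : R) : ∃ x : R, a = a * x * a := by
  by_cases ha : a ∈ Ideal.span ({a * a} : Set R)
  · obtain ⟨x, hx⟩ := Ideal.mem_span_singleton'.1 ha
    exact ⟨x, by linear_combination -hx⟩
  exfalso
  set K : Ideal R := (Ideal.span ({a * a} : Set R)).colon (Ideal.span {a}) with hK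
  have hKne : K ≠ ⊤ := by
    intro h
    apply ha
    have : (1 : R) ∈ K := h ▸ trivial
    have := Submodule.mem_colon_span_singleton.1 this
    simpa using this
  obtain ⟨m, hm, hKm⟩ := Ideal.exists_le_maximal K hKne
  have haM : a ∈ m := by
    apply hKm
    apply Submodule.mem_colon_span_singleton.2
    simpa [smul_eq_mul] using Ideal.mem_span_singleton_self (a * a)
  have hsimple : IsSimpleModule R (R ⧸ m) :=
    isSimpleModule_iff_isCoatom.2 (Ideal.isMaximal_def.1 hm)
  have hinj := hV (R ⧸ m) hsimple
  set ψ : R →ₗ[R] R := LinearMap.toSpanSingleton R R a with hψ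
  have hkerψ : LinearMap.ker ψ ≤ Submodule.comap LinearMap.id m := by
    intro r hr
    apply hKm
    apply Submodule.mem_colon_span_singleton.2
    have h0 : r * a = 0 := hr
    simp [h0]
  set e : (R ⧸ LinearMap.ker ψ) ≃ₗ[R] LinearMap.range ψ := ψ.quotKerEquivRange with he
  set g : LinearMap.range ψ →ₗ[R] R ⧸ m :=
    (Submodule.mapQ (LinearMap.ker ψ) m LinearMap.id hkerψ) ∘ₗ (e.symm : _ →ₗ[R] _) with hg
  obtain ⟨h, hh⟩ := hinj.out (LinearMap.range ψ).subtype (Submodule.injective_subtype _) g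
  have hmem : a ∈ LinearMap.range ψ := ⟨1, by simp [hψ]⟩
  have h1 : h a = g ⟨a, hmem⟩ := hh ⟨a, hmem⟩
  have hsym : e.symm ⟨a, hmem⟩ = Submodule.Quotient.mk 1 := by
    have h9 : ψ 1 ∈ LinearMap.range ψ := ⟨1, rfl⟩
    have h8 := ψ.quotKerEquivRange_symm_apply_image 1 h9
    have h7 : (⟨a, hmem⟩ : LinearMap.range ψ) = ⟨ψ 1, h9⟩ := by
      apply Subtype.ext; simp [hψ]
    rw [he, h7, h8]; rfl
  have h2 : g ⟨a, hmem⟩ = Submodule.Quotient.mk (1 : R) := by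
    rw [hg, LinearMap.comp_apply]
    erw [hsym]
    erw [Submodule.mapQ_apply]
    rfl
  obtain ⟨c, hc⟩ := Submodule.Quotient.mk_surjective m (h 1)
  have h3 : h a = Submodule.Quotient.mk (a * c) := by
    have : (a : R) = a • (1 : R) := by simp
    rw [this, map_smul, ← hc, ← Submodule.Quotient.mk_smul]
    simp [smul_eq_mul, mul_comm]
  have : (1 : R) - a * c ∈ m := by
    rw [← Submodule.Quotient.eq]
    rw [← h3, h1, h2]
  have hone : (1 : R) ∈ m := by
    have := m.add_mem this (m.mul_mem_right c haM)
    simpa using this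
  exact hm.ne_top (Ideal.eq_top_of_isUnit_mem m hone isUnit_one)

theorem stmt_15 (R : Type u) [CommRing R]
    (hV : ∀ (M : Type u) [AddCommGroup M] [Module R M], IsSimpleModule R M →
      Module.Injective R M) :
    (∀ a : R, ∃ x : R, a = a * x * a) ∧ (IsLocalRing R → IsField R) := by
  have hvn := key R hV
  refine ⟨hvn, fun hloc => ?_⟩
  refine ⟨⟨0, 1, zero_ne_one⟩, mul_comm, fun {a} ha => ?_⟩
  obtain ⟨x, hx⟩ := hvn a
  have hid : IsIdempotentElem (x * a) := by
    unfold IsIdempotentElem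
    linear_combination (-x) * hx
  rcases IsLocalRing.isUnit_or_isUnit_one_sub_self (x * a) with h | h
  · refine ⟨x, ?_⟩
    have h5 : (x * a) * ((x * a) - 1) = 0 := by linear_combination hid.eq
    have h6 : (x * a) - 1 = 0 := by
      rcases h with ⟨u, hu⟩
      have := congrArg (fun t => (↑u⁻¹ : R) * t) h5
      simp only [← hu, mul_zero] at this
      rw [← mul_assoc, Units.inv_mul, one_mul] at this
      rwa [hu] at this
    have : x * a = 1 := by linear_combination h6
    linear_combination this
  · exfalso
    apply ha
    have h5 : a * (1 - x * a) = 0 := by linear_combination hx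
    rcases h with ⟨u, hu⟩
    have := congrArg (fun t => t * (↑u⁻¹ : R)) h5
    simp only [zero_mul] at this
    rw [← hu, mul_assoc, Units.mul_inv, mul_one] at this
    exact absurd this ha
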